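/- Let G be a finite group and H an NR-subgroup of prime index in G. If H is supersolvable, then G is supersolvable. -/

import Mathlib

/-- `H` is an NR-subgroup of `G` if for every normal subgroup `K` of `H`,
the intersection of `H` with the normal closure of `K` in `G` equals `K`. -/
def IsNRSubgroup {G : Type*} [Group G] (H : Subgroup G) : Prop :=
  ∀ K : Subgroup G, K ≤ H → (∀ h ∈ H, ∀ k ∈ K, h * k * h⁻¹ ∈ K) →
    H ⊓ Subgroup.normalClosure (K : Set G) = K

/-- A group is supersolvable if it has a normal series (all terms normal in the whole
group) with cyclic factors. -/
def IsSupersolvable (G : Type*) [Group G] : Prop :=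
  ∃ (n : ℕ) (s : Fin (n + 1) → Subgroup G),
    s 0 = ⊥ ∧ s (Fin.last n) = ⊤ ∧
    (∀ i : Fin n, s i.castSucc ≤ s i.succ) ∧
    (∀ i, (s i).Normal) ∧
    ∀ i : Fin n, ∀ _ : (s i.castSucc).Normal,
      IsCyclic ((s i.succ) ⧸ ((s i.castSucc).subgroupOf (s i.succ)))

universe u

open Subgroup

/-- Cyclic factor in "coset" form. -/
def CF {G : Type*} [Group G] (H₁ H₂ : Subgroup G) : Prop :=
  ∃ g ∈ H₂, ∀ x ∈ H₂, ∃ n : ℤ, (g ^ n)⁻¹ * x ∈ H₁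

def SS (G : Type*) [Group G] : Prop :=
  ∃ (n : ℕ) (s : Fin (n + 1) → Subgroup G),
    s 0 = ⊥ ∧ s (Fin.last n) = ⊤ ∧
    (∀ i : Fin n, s i.castSucc ≤ s i.succ) ∧
    (∀ i, (s i).Normal) ∧
    ∀ i : Fin n, CF (s i.castSucc) (s i.succ)

theorem cf_iff {G : Type*} [Group G] (H₁ H₂ : Subgroup G) [h : (H₁.subgroupOf H₂).Normal] :
    IsCyclic (H₂ ⧸ H₁.subgroupOf H₂) ↔ CF H₁ H₂ := by
  constructor
  · rintro hc
    obtain ⟨gen, hgen⟩ := hc.exists_generator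
    obtain ⟨g₀, rfl⟩ := QuotientGroup.mk_surjective gen
    refine ⟨g₀, g₀.2, fun x hx => ?_⟩
    obtain ⟨n, hn⟩ := (Subgroup.mem_zpowers_iff).mp (hgen ((⟨x, hx⟩ : H₂) : H₂ ⧸ H₁.subgroupOf H₂))
    rw [← QuotientGroup.mk_zpow] at hn
    have := QuotientGroup.eq.mp hn
    exact ⟨n, by simpa [Subgroup.mem_subgroupOf] using this⟩
  · rintro ⟨g, hg, hgen⟩
    refine ⟨⟨QuotientGroup.mk (⟨g, hg⟩ : H₂), fun q => ?_⟩⟩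
    obtain ⟨x, rfl⟩ := QuotientGroup.mk_surjective q
    obtain ⟨n, hn⟩ := hgen x x.2
    refine Subgroup.mem_zpowers_iff.mpr ⟨n, ?_⟩
    rw [← QuotientGroup.mk_zpow]
    exact QuotientGroup.eq.mpr (by simpa [Subgroup.mem_subgroupOf] using hn)

theorem ss_iff (G : Type*) [Group G] : IsSupersolvable G ↔ SS G := by
  constructor <;> rintro ⟨n, s, h0, hlast, hmono, hnorm, hcyc⟩ <;>
    refine ⟨n, s, h0, hlast, hmono, hnorm, fun i => ?_⟩
  · haveI := hnorm i.castSucc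
    exact (cf_iff _ _).mp (hcyc i (hnorm i.castSucc))
  · intro hn
    haveI := hnorm i.castSucc
    exact (cf_iff _ _).mpr (hcyc i)

theorem SS.of_surjective {G G' : Type*} [Group G] [Group G'] (f : G →* G')
    (hf : Function.Surjective f) (h : SS G) : SS G' := by
  obtain ⟨n, s, h0, hlast, hmono, hnorm, hcyc⟩ := h
  refine ⟨n, fun i => (s i).map f, by simp [h0], by simp [hlast, Subgroup.map_top_of_surjective f hf],
    fun i => Subgroup.map_mono (hmono i), fun i => (hnorm i).map f hf, fun i => ?_⟩
  obtain ⟨g, hg, hgen⟩ := hcyc i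
  refine ⟨f g, Subgroup.mem_map_of_mem f hg, fun x hx => ?_⟩
  obtain ⟨y, hy, rfl⟩ := hx
  obtain ⟨m, hm⟩ := hgen y hy
  exact ⟨m, by simpa [← map_zpow, ← map_inv, ← map_mul] using Subgroup.mem_map_of_mem f hm⟩

theorem SS.of_cyclic {G : Type*} [Group G] (h : IsCyclic G) : SS G := by
  obtain ⟨g, hg⟩ := h.exists_generator
  refine ⟨1, ![⊥, ⊤], rfl, rfl, ?_, ?_, ?_⟩
  · intro i; fin_cases i; simp
  · intro i; fin_cases i <;> simp <;> infer_instance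
  · intro i; fin_cases i
    refine ⟨g, by simp, fun x _ => ?_⟩
    obtain ⟨m, hm⟩ := Subgroup.mem_zpowers_iff.mp (hg x)
    exact ⟨m, by simp [hm, show (Fin.castSucc (0 : Fin 1)) = 0 from rfl]⟩

theorem SS.extension {G : Type*} [Group G] (N : Subgroup G) [hNn : N.Normal]
    (hgen : ∃ g ∈ N, ∀ x ∈ N, ∃ n : ℤ, x = g ^ n) (h : SS (G ⧸ N)) : SS G := by
  obtain ⟨m, t, h0, hlast, hmono, hnorm, hcyc⟩ := h
  set π := QuotientGroup.mk' N with hπ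
  refine ⟨m + 1, Fin.cases ⊥ (fun i => (t i).comap π), by simp, ?_, ?_, ?_, ?_⟩
  · have : Fin.last (m + 1) = (Fin.last m).succ := rfl
    simp only [this, Fin.cases_succ, hlast, Subgroup.comap_top]
  · intro i
    induction i using Fin.cases with
    | zero =>
      have h1 : (0 : Fin (m + 1)).castSucc = 0 := rfl
      have h2 : (0 : Fin (m + 1)).succ = (0 : Fin m.succ).succ := rfl
      simp only [h1, h2, Fin.cases_zero, Fin.cases_succ]
      exact bot_le
    | succ j =>
      have h1 : (j.succ).castSucc = (j.castSucc).succ := rfl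
      simp only [h1, Fin.cases_succ]
      exact Subgroup.comap_mono (hmono j)
  · intro i
    induction i using Fin.cases with
    | zero => simp only [Fin.cases_zero]; infer_instance
    | succ j => simp only [Fin.cases_succ]; exact (hnorm j).comap π
  · intro i
    induction i using Fin.cases with
    | zero =>
      have h1 : (0 : Fin (m + 1)).castSucc = 0 := rfl
      have h2 : (0 : Fin (m + 1)).succ = (0 : Fin m.succ).succ := rfl
      simp only [h1, h2, Fin.cases_zero, Fin.cases_succ]
      obtain ⟨g, hgN, hgg⟩ := hgen
      refine ⟨g, ?_, fun x hx => ?_⟩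
      · simp only [Subgroup.mem_comap, h0]
        simpa [hπ] using (QuotientGroup.eq_one_iff g).mpr hgN
      · have hxN : x ∈ N := by
          have := Subgroup.mem_comap.mp hx
          rw [h0] at this
          simpa [hπ, QuotientGroup.eq_one_iff] using this
        obtain ⟨n, hn⟩ := hgg x hxN
        exact ⟨n, by simp [hn]⟩
    | succ j =>
      have h1 : (j.succ).castSucc = (j.castSucc).succ := rfl
      simp only [h1, Fin.cases_succ]
      obtain ⟨g, hg, hgg⟩ := hcyc j
      obtain ⟨g₀, rfl⟩ := QuotientGroup.mk'_surjective N g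
      refine ⟨g₀, hg, fun x hx => ?_⟩
      obtain ⟨n, hn⟩ := hgg (π x) hx
      exact ⟨n, by simpa [Subgroup.mem_comap, hπ] using hn⟩

theorem SS.exists_prime_normal {G : Type*} [Group G] [Finite G] (h : SS G)
    (hG : Nontrivial G) : ∃ B : Subgroup G, B.Normal ∧ (Nat.card B).Prime := by
  obtain ⟨n, s, h0, hlast, hmono, hnorm, hcyc⟩ := h
  have key : ∃ i : Fin n, s i.castSucc = ⊥ ∧ s i.succ ≠ ⊥ := by
    by_contra hcon
    push_neg at hcon
    have hall : ∀ j, s j = ⊥ := by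
      intro j
      induction j using Fin.induction with
      | zero => exact h0
      | succ i ih => exact hcon i ih
    have := hall (Fin.last n)
    rw [hlast] at this
    exact absurd this.symm bot_ne_top
  obtain ⟨i, hibot, hine⟩ := key
  set A₀ := s i.succ with hA₀
  have hA₀norm : A₀.Normal := hnorm i.succ
  obtain ⟨g, hgA, hgen⟩ := hcyc i
  rw [hibot] at hgen
  have hgen' : ∀ x ∈ A₀, ∃ n : ℤ, x = g ^ n := by
    intro x hx
    obtain ⟨n, hn⟩ := hgen x hx
    exact ⟨n, by rwa [Subgroup.mem_bot, inv_mul_eq_one, eq_comm] at hn⟩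
  have hg1 : g ≠ 1 := by
    rintro rfl
    apply hine
    rw [eq_bot_iff]
    intro x hx
    obtain ⟨n, hn⟩ := hgen' x hx
    simp [hn]
  set m := orderOf g with hm
  have hm0 : m ≠ 0 := (orderOf_pos g).ne'
  have hm1 : m ≠ 1 := by simpa [hm, orderOf_eq_one_iff] using hg1
  set q := m.minFac with hq
  have hqprime : q.Prime := Nat.minFac_prime hm1
  have hqdvd : q ∣ m := Nat.minFac_dvd m
  set h₁ := g ^ (m / q) with hh₁
  have horder : orderOf h₁ = q := orderOf_pow_orderOf_div hm0 hqdvd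
  have hh₁A : h₁ ∈ A₀ := pow_mem hgA _
  refine ⟨Subgroup.zpowers h₁, ?_, by rwa [Nat.card_zpowers, horder]⟩
  constructor
  intro b hb c
  obtain ⟨k, rfl⟩ := Subgroup.mem_zpowers_iff.mp hb
  have hbA : h₁ ^ k ∈ A₀ := zpow_mem hh₁A k
  have hcA : c * h₁ ^ k * c⁻¹ ∈ A₀ := hA₀norm.conj_mem _ hbA c
  obtain ⟨t, ht⟩ := hgen' _ hcA
  have hbq : (h₁ ^ k) ^ (q : ℤ) = 1 := by
    rw [← zpow_mul, mul_comm, zpow_mul]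
    norm_cast
    rw [← horder, pow_orderOf_eq_one, one_zpow]
  have h1 : g ^ (t * q) = 1 := by
    rw [zpow_mul, ← ht]
    calc (c * h₁ ^ k * c⁻¹) ^ (q : ℤ) = c * (h₁ ^ k) ^ (q : ℤ) * c⁻¹ :=
          conj_zpow
      _ = 1 := by rw [hbq]; group
  have hdvd : ((m : ℤ)) ∣ t * q := orderOf_dvd_iff_zpow_eq_one.mpr h1
  have hmq : (m : ℤ) = (q : ℤ) * ((m / q : ℕ) : ℤ) := by
    norm_cast
    exact (Nat.mul_div_cancel' hqdvd).symm
  have hdvd2 : ((m / q : ℕ) : ℤ) ∣ t := by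
    rw [hmq] at hdvd
    rw [mul_comm] at hdvd
    have hq0 : ((q : ℕ) : ℤ) ≠ 0 := by exact_mod_cast hqprime.ne_zero
    exact (mul_dvd_mul_iff_right hq0).mp hdvd
  obtain ⟨u, hu⟩ := hdvd2
  refine Subgroup.mem_zpowers_iff.mpr ⟨u, ?_⟩
  rw [ht, hu, zpow_mul]
  norm_cast


theorem aux_NR : ∀ (n : ℕ) (G : Type u) (_ : Group G) (_ : Finite G) (H : Subgroup G),
    Nat.card G ≤ n → IsNRSubgroup H → (H.index).Prime → SS ↥H → SS G := by
  intro n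
  induction n with
  | zero =>
    intro G _ _ H hcard _ _ _
    exact absurd hcard (by simpa using Nat.card_pos.ne')
  | succ n ih =>
    intro G _ _ H hcard hNR hidx hss
    by_cases hHbot : H = ⊥
    · haveI : Fact (H.index).Prime := ⟨hidx⟩
      have hcardG : Nat.card G = H.index := by
        rw [hHbot]; exact (Subgroup.index_bot).symm
      exact SS.of_cyclic (isCyclic_of_prime_card hcardG)
    · haveI hHnt : Nontrivial ↥H := (Subgroup.nontrivial_iff_ne_bot H).mpr hHbot
      obtain ⟨B, hBnorm, hBprime⟩ := SS.exists_prime_normal hss hHnt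
      set A := B.map H.subtype with hA
      have hAcard : Nat.card A = Nat.card B :=
        Nat.card_congr (Subgroup.equivMapOfInjective B H.subtype H.subtype_injective).toEquiv.symm
      have hAprime : (Nat.card A).Prime := by rw [hAcard]; exact hBprime
      have hAle : A ≤ H := Subgroup.map_subtype_le B
      have hAconj : ∀ h ∈ H, ∀ a ∈ A, h * a * h⁻¹ ∈ A := by
        rintro h hh a ⟨b, hb, rfl⟩
        exact ⟨(⟨h, hh⟩ : H) * b * (⟨h, hh⟩ : H)⁻¹, hBnorm.conj_mem b hb ⟨h, hh⟩, rfl⟩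
      have hmax : ∀ K : Subgroup G, H ≤ K → K = H ∨ K = ⊤ := by
        intro K hK
        rcases hidx.eq_one_or_self_of_dvd K.index (Subgroup.index_dvd_of_le hK) with h1 | h1
        · right; exact Subgroup.index_eq_one.mp h1
        · left
          have h2 := Subgroup.relIndex_mul_index hK
          rw [h1] at h2
          have hrel : H.relIndex K = 1 := by
            have hpos : 0 < H.index := hidx.pos
            have : H.relIndex K * H.index = 1 * H.index := by rw [one_mul]; exact h2
            exact Nat.eq_of_mul_eq_mul_right hpos this
          exact le_antisymm (Subgroup.relIndex_eq_one.mp hrel) hK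
      -- generator of any prime-card subgroup
      have genOf : ∀ (N : Subgroup G), (Nat.card N).Prime →
          ∃ g ∈ N, ∀ x ∈ N, ∃ m : ℤ, x = g ^ m := by
        intro N hNp
        haveI : Fact (Nat.card N).Prime := ⟨hNp⟩
        haveI : IsCyclic ↥N := isCyclic_of_prime_card rfl
        obtain ⟨gN, hgN⟩ := IsCyclic.exists_generator (α := ↥N)
        refine ⟨gN, gN.2, fun x hx => ?_⟩
        obtain ⟨m, hm⟩ := Subgroup.mem_zpowers_iff.mp (hgN ⟨x, hx⟩)
        refine ⟨m, ?_⟩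
        have := congrArg (Subtype.val) hm
        simpa using this.symm
      by_cases hAn : A.Normal
      · -- Case 1 : A is normal in G, pass to the quotient
        haveI := hAn
        set π := QuotientGroup.mk' A with hπ
        have hπsurj : Function.Surjective π := QuotientGroup.mk'_surjective A
        have hkerπ : π.ker = A := QuotientGroup.ker_mk' A
        have hcardlt : Nat.card (G ⧸ A) ≤ n := by
          have h1 : Nat.card G = Nat.card (G ⧸ A) * Nat.card A :=
            Subgroup.card_eq_card_quotient_mul_card_subgroup A
          have h2 : 0 < Nat.card (G ⧸ A) := Nat.card_pos
          have h3 : Nat.card (G ⧸ A) < Nat.card G := by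
            rw [h1]
            exact (lt_mul_iff_one_lt_right h2).mpr hAprime.one_lt
          omega
        have hNR' : IsNRSubgroup (H.map π) := by
          intro K' hK'le hK'conj
          set K := K'.comap π with hK
          have hKle : K ≤ H := by
            have h1 : K ≤ (H.map π).comap π := Subgroup.comap_mono hK'le
            rwa [Subgroup.comap_map_eq, hkerπ, sup_of_le_left hAle] at h1
          have hAK : A ≤ K := by
            intro a ha
            rw [hK, Subgroup.mem_comap]
            have : π a = 1 := by
              rw [← MonoidHom.mem_ker, hkerπ]; exact ha
            rw [this]; exact one_mem K'
          have hKconj : ∀ h ∈ H, ∀ k ∈ K, h * k * h⁻¹ ∈ K := by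
            intro h hh k hk
            simp only [hK, Subgroup.mem_comap, map_mul, map_inv]
            exact hK'conj (π h) (Subgroup.mem_map_of_mem π hh) (π k) hk
          have hmain := hNR K hKle hKconj
          have hmapK : K.map π = K' := Subgroup.map_comap_eq_self_of_surjective hπsurj K'
          apply Subgroup.comap_injective hπsurj
          have hnc : Subgroup.normalClosure (K' : Set (G ⧸ A)) =
              (Subgroup.normalClosure (K : Set G)).map π := by
            rw [← hmapK, Subgroup.coe_map, Subgroup.map_normalClosure _ _ hπsurj]
          rw [Subgroup.comap_inf, Subgroup.comap_map_eq, hkerπ, sup_of_le_left hAle, hnc,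
            Subgroup.comap_map_eq, hkerπ,
            sup_of_le_left (hAK.trans Subgroup.le_normalClosure)]
          exact hmain
        have hidx' : (H.map π).index = H.index :=
          Subgroup.index_map_eq H hπsurj (by rw [hkerπ]; exact hAle)
        have hss' : SS ↥(H.map π) :=
          SS.of_surjective (π.subgroupMap H) (MonoidHom.subgroupMap_surjective π H) hss
        have hSSq : SS (G ⧸ A) :=
          ih (G ⧸ A) inferInstance inferInstance (H.map π) hcardlt hNR'
            (by rwa [hidx']) hss'
        exact SS.extension A (genOf A hAprime) hSSq
      · -- Case 2 : A is not normal in G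
        set p := H.index with hp
        set q := Nat.card A with hqdef
        haveI hqfact : Fact q.Prime := ⟨hAprime⟩
        have hnormalizer : normalizer (A : Set G) = H := by
          have hle : H ≤ normalizer (A : Set G) := by
            intro h hh
            rw [Subgroup.mem_normalizer_iff]
            intro a
            constructor
            · exact fun ha => hAconj h hh a ha
            · intro ha
              have h2 := hAconj h⁻¹ (inv_mem hh) _ ha
              simpa [mul_assoc] using h2
          rcases hmax (normalizer (A : Set G)) hle with h1 | h1
          · exact h1
          · exact absurd (Subgroup.normalizer_eq_top_iff.mp h1) hAn
        set M := Subgroup.normalClosure (A : Set G) with hM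
        haveI hMnormal : M.Normal := Subgroup.normalClosure_normal
        have hAM : A ≤ M := Subgroup.le_normalClosure
        have hHM : H ⊓ M = A := hNR A hAle hAconj
        have hMnleH : ¬ M ≤ H := by
          intro hle
          have h1 : M = A := le_antisymm (by rw [← hHM]; exact le_inf hle le_rfl) hAM
          exact hAn (h1 ▸ hMnormal)
        have hsup : H ⊔ M = ⊤ := by
          rcases hmax (H ⊔ M) le_sup_left with h1 | h1
          · exact absurd (le_sup_right.trans h1.le) hMnleH
          · exact h1
        have hr : M.index = A.relIndex H := by
          have h1 : M.relIndex (H ⊔ M) = M.relIndex H := Subgroup.relIndex_sup_right H M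
          rw [hsup, Subgroup.relIndex_top_right] at h1
          rw [h1, ← Subgroup.inf_relIndex_left, hHM]
        have hcardH : Nat.card ↥H = A.relIndex H * q := by
          have h1 := Subgroup.index_mul_card (A.subgroupOf H)
          have h2 : Nat.card (A.subgroupOf H) = q :=
            Nat.card_congr (Subgroup.subgroupOfEquivOfLe hAle).toEquiv
          rw [h2] at h1
          exact h1.symm
        have hrpos : A.relIndex H ≠ 0 := by
          intro h0
          have := hcardH
          rw [h0, zero_mul] at this
          exact (Nat.card_pos (α := ↥H)).ne' this
        have hcardM : Nat.card ↥M = p * q := by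
          have h1 : A.relIndex H * Nat.card ↥M = A.relIndex H * (p * q) := by
            have e1 : M.index * Nat.card ↥M = Nat.card G := Subgroup.index_mul_card M
            have e2 : p * Nat.card ↥H = Nat.card G := Subgroup.index_mul_card H
            rw [hr] at e1
            rw [hcardH] at e2
            rw [e1, ← e2]
            ring
          exact Nat.eq_of_mul_eq_mul_left (Nat.pos_of_ne_zero hrpos) h1
        set A' := A.subgroupOf M with hA'
        have hcardA' : Nat.card A' = q :=
          Nat.card_congr (Subgroup.subgroupOfEquivOfLe hAM).toEquiv
        have hA'normalizer : normalizer (A' : Set ↥M) = A' := by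
          refine le_antisymm ?_ Subgroup.le_normalizer
          intro x hx
          have hxH : (x : G) ∈ H := by
            rw [← hnormalizer, Subgroup.mem_normalizer_iff]
            rw [Subgroup.mem_normalizer_iff] at hx
            intro a
            constructor
            · intro ha
              have h1 := (hx ⟨a, hAM ha⟩).mp (Subgroup.mem_subgroupOf.mpr ha)
              exact Subgroup.mem_subgroupOf.mp h1
            · intro ha
              have haM : a ∈ M := by
                have h2 : (x : G) * a * (x : G)⁻¹ ∈ M := hAM ha
                have h3 := hMnormal.conj_mem _ h2 (x : G)⁻¹
                simpa [mul_assoc] using h3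
              have h1 := (hx ⟨a, haM⟩).mpr (Subgroup.mem_subgroupOf.mpr ha)
              exact Subgroup.mem_subgroupOf.mp h1
          have hxA : (x : G) ∈ A := by
            rw [← hHM]; exact ⟨hxH, x.2⟩
          exact Subgroup.mem_subgroupOf.mpr hxA
        have hA'ne_top : A' ≠ ⊤ := by
          intro h1
          have h2 := hcardA'
          rw [h1, Subgroup.card_top, hcardM] at h2
          have h3 : q < p * q := (lt_mul_iff_one_lt_left (by
            have := hAprime.two_le; omega : 0 < q)).mpr hidx.one_lt
          omega
        have hpq : p ≠ q := by
          intro hpq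
          have hM2 : Nat.card ↥M = q ^ 2 := by rw [hcardM, ← hpq]; ring
          have hPG : IsPGroup q ↥M := IsPGroup.of_card hM2
          have hcomm := IsPGroup.commutative_of_card_eq_prime_sq hM2
          have : normalizer (A' : Set ↥M) = ⊤ := by
            rw [Subgroup.normalizer_eq_top_iff]
            exact ⟨fun a ha c => by rw [hcomm c a, mul_assoc, mul_inv_cancel, mul_one]; exact ha⟩
          exact hA'ne_top (by rw [← hA'normalizer, this])
        -- Sylow theory in M
        have hfactq : (Nat.card ↥M).factorization q = 1 := by
          rw [hcardM, Nat.factorization_mul hidx.ne_zero hAprime.ne_zero]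
          simp [hidx.factorization, hAprime.factorization, Finsupp.single_apply, hpq]
        have hA'card_pow : Nat.card A' = q ^ (Nat.card ↥M).factorization q := by
          rw [hfactq, pow_one, hcardA']
        let PM : Sylow q ↥M := Sylow.ofCard A' hA'card_pow
        have hPMcoe : (PM : Subgroup ↥M) = A' := Sylow.coe_ofCard A' hA'card_pow
        have hA'index : A'.index = p := by
          have h1 := Subgroup.index_mul_card A'
          rw [hcardA', hcardM] at h1
          exact Nat.eq_of_mul_eq_mul_right hAprime.pos h1
        have hnq : Nat.card (Sylow q ↥M) = p := by
          rw [Sylow.card_eq_index_normalizer PM, show (PM : Set ↥M) = ((A' : Subgroup ↥M) : Set ↥M) from congrArg SetLike.coe hPMcoe, hA'normalizer, hA'index]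
        have hmod : p % q = 1 % q := by
          have := card_sylow_modEq_one q ↥M
          rwa [hnq] at this
        have hqltp : q < p := by
          have hdvd : q ∣ p - 1 := (Nat.modEq_iff_dvd' hidx.one_lt.le).mp hmod.symm
          have hp2 := hidx.two_le
          have hq2 := hAprime.two_le
          have h1 : q ≤ p - 1 := Nat.le_of_dvd (by omega) hdvd
          omega
        haveI hpfact : Fact p.Prime := ⟨hidx⟩
        obtain ⟨P'⟩ := (Sylow.nonempty : Nonempty (Sylow p ↥M))
        have hfactp : (Nat.card ↥M).factorization p = 1 := by
          rw [hcardM, Nat.factorization_mul hidx.ne_zero hAprime.ne_zero]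
          simp [hidx.factorization, hAprime.factorization, Finsupp.single_apply,
            (Ne.symm hpq)]
        have hcardP' : Nat.card ↥(P' : Subgroup ↥M) = p := by
          rw [Sylow.card_eq_multiplicity P', hfactp, pow_one]
        have hindexP' : (P' : Subgroup ↥M).index = q := by
          have h1 := Subgroup.index_mul_card (P' : Subgroup ↥M)
          rw [hcardP', hcardM] at h1
          have h2 : (P' : Subgroup ↥M).index * p = q * p := by rw [h1]; ring
          exact Nat.eq_of_mul_eq_mul_right hidx.pos h2
        have hcount : Nat.card (Sylow p ↥M) = 1 := by
          have h1 : Nat.card (Sylow p ↥M) ∣ q := hindexP' ▸ Sylow.card_dvd_index P'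
          rcases hAprime.eq_one_or_self_of_dvd _ h1 with h2 | h2
          · exact h2
          · exfalso
            have h3 := card_sylow_modEq_one p ↥M
            rw [h2] at h3
            have h4 : q % p = 1 % p := h3
            rw [Nat.mod_eq_of_lt hqltp, Nat.mod_eq_of_lt hidx.one_lt] at h4
            exact hAprime.one_lt.ne' h4
        haveI hsing : Subsingleton (Sylow p ↥M) := (Nat.card_eq_one_iff_unique.mp hcount).1
        have hP'normal : (P' : Subgroup ↥M).Normal := by
          rw [← Subgroup.normalizer_eq_top_iff, eq_top_iff]
          intro g _
          refine Sylow.smul_eq_iff_mem_normalizer.mp ?_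
          exact Subsingleton.elim _ _
        haveI hP'char : (P' : Subgroup ↥M).Characteristic :=
          Sylow.characteristic_of_normal P' hP'normal
        set N := (P' : Subgroup ↥M).map M.subtype with hN
        haveI hNnormal : N.Normal := inferInstance
        have hcardN : Nat.card N = p := by
          have h1 : Nat.card N = Nat.card ↥(P' : Subgroup ↥M) :=
            Nat.card_congr (Subgroup.equivMapOfInjective _ M.subtype
              M.subtype_injective).toEquiv.symm
          rw [h1, hcardP']
        have hNM : N ≤ M := Subgroup.map_subtype_le _
        have hNH : N ⊓ H = ⊥ := by
          have h1 : N ⊓ H ≤ A := by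
            intro x hx
            rw [← hHM]
            exact ⟨hx.2, hNM hx.1⟩
          have h2 : Nat.card ↥(N ⊓ H) ∣ p := hcardN ▸ Subgroup.card_dvd_of_le inf_le_left
          have h3 : Nat.card ↥(N ⊓ H) ∣ q := hqdef ▸ Subgroup.card_dvd_of_le h1
          rw [← Subgroup.card_eq_one]
          rcases hidx.eq_one_or_self_of_dvd _ h2 with h4 | h4
          · exact h4
          · exfalso
            rw [h4] at h3
            rcases hAprime.eq_one_or_self_of_dvd _ h3 with h5 | h5
            · exact hidx.one_lt.ne' h5
            · exact hpq h5
        have hNnleH : ¬ N ≤ H := by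
          intro hle
          have h1 : N = ⊥ := by
            rw [← hNH]
            exact (inf_of_le_left hle).symm
          rw [h1, Subgroup.card_bot] at hcardN
          exact hidx.one_lt.ne' hcardN.symm
        have hsupN : H ⊔ N = ⊤ := by
          rcases hmax (H ⊔ N) le_sup_left with h1 | h1
          · exact absurd (le_sup_right.trans h1.le) hNnleH
          · exact h1
        set ψ := (QuotientGroup.mk' N).comp H.subtype with hψ
        have hψsurj : Function.Surjective ψ := by
          intro y
          obtain ⟨g, rfl⟩ := QuotientGroup.mk'_surjective N y
          have hg : g ∈ (↑(H ⊔ N) : Set G) := by rw [hsupN]; trivial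
          rw [Subgroup.mul_normal H N] at hg
          obtain ⟨h, hh, k, hk, rfl⟩ := hg
          refine ⟨⟨h, hh⟩, ?_⟩
          show QuotientGroup.mk h = QuotientGroup.mk (h * k)
          rw [QuotientGroup.eq]
          simpa using hk
        have hSSq : SS (G ⧸ N) := SS.of_surjective ψ hψsurj hss
        exact SS.extension N (genOf N (by rw [hcardN]; exact hidx)) hSSq

theorem supersolvable_of_NR_prime_index {G : Type*} [Group G] [Finite G]
    (H : Subgroup G) (hNR : IsNRSubgroup H) (hidx : (H.index).Prime)
    (hss : IsSupersolvable H) : IsSupersolvable G := by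
  rw [ss_iff] at hss ⊢
  exact aux_NR (Nat.card G) G inferInstance inferInstance H le_rfl hNR hidx hss
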